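/- Let ρ be the semicircle density ρ(x) = (1/(2π))√(4 − x²) on [−2, 2]. Then its Hilbert transform satisfies Hρ(x) := p.v. ∫ ρ(y)/(x − y) dy = x/2 for all x ∈ (−2, 2), i.e. the semicircle law solves the Euler–Lagrange equation Hμ_V = V'/2 for V(x) = x²/2. -/

import Mathlib

open MeasureTheory Filter

noncomputable def Fa (x y : ℝ) : ℝ :=
  x * Real.arcsin (y / 2) - Real.sqrt (4 - y ^ 2) +
    Real.sqrt (4 - x ^ 2) *
      (Real.log (4 - x * y + Real.sqrt (4 - x ^ 2) * Real.sqrt (4 - y ^ 2)) - Real.log (y - x))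


lemma Fa_hasDerivAt {x y : ℝ} (hx : |x| < 2) (hy : |y| < 2) (hxy : y ≠ x) :
    HasDerivAt (Fa x) (Real.sqrt (4 - y ^ 2) / (x - y)) y := by
  have hx2 : x ^ 2 < 4 := by nlinarith [sq_abs x, abs_nonneg x]
  have hy2 : y ^ 2 < 4 := by nlinarith [sq_abs y, abs_nonneg y]
  have h4x : (0:ℝ) < 4 - x ^ 2 := by linarith
  have h4y : (0:ℝ) < 4 - y ^ 2 := by linarith
  set s := Real.sqrt (4 - x ^ 2) with hs
  set r := Real.sqrt (4 - y ^ 2) with hrdef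
  have hr : 0 < r := Real.sqrt_pos.mpr h4y
  have hsp : 0 < s := Real.sqrt_pos.mpr h4x
  have hr2 : r ^ 2 = 4 - y ^ 2 := Real.sq_sqrt h4y.le
  have hs2 : s ^ 2 = 4 - x ^ 2 := Real.sq_sqrt h4x.le
  have hxy4 : x * y < 4 := by nlinarith [sq_abs x, sq_abs y, sq_nonneg (|x| - |y|), abs_mul x y, le_abs_self (x*y)]
  have hv : 0 < 4 - x * y + s * r := by nlinarith [mul_pos hsp hr]
  have hyx : y - x ≠ 0 := sub_ne_zero.mpr hxy
  have hxmy : x - y ≠ 0 := sub_ne_zero.mpr (fun h => hxy h.symm)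
  have hvne : (4 - x * y + s * r) ≠ 0 := ne_of_gt hv
  -- pieces
  have dinner : HasDerivAt (fun t : ℝ => t / 2) (1 / 2) y := by
    simpa using (hasDerivAt_id y).div_const 2
  have hne1 : y / 2 ≠ -1 := by intro h; rw [div_eq_iff (by norm_num : (2:ℝ) ≠ 0)] at h; rw [abs_lt] at hy; linarith
  have hne2 : y / 2 ≠ 1 := by intro h; rw [div_eq_iff (by norm_num : (2:ℝ) ≠ 0)] at h; rw [abs_lt] at hy; linarith
  have d1 : HasDerivAt (fun t : ℝ => Real.arcsin (t / 2)) (1 / Real.sqrt (1 - (y / 2) ^ 2) * (1 / 2)) y := by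
    have := (Real.hasDerivAt_arcsin hne1 hne2).comp y dinner
    simpa [Function.comp_def] using this
  have dsq : HasDerivAt (fun t : ℝ => 4 - t ^ 2) (-(2 * y)) y := by
    simpa using (hasDerivAt_pow 2 y).const_sub 4
  have dr : HasDerivAt (fun t : ℝ => Real.sqrt (4 - t ^ 2)) (1 / (2 * r) * -(2 * y)) y := by
    have := (Real.hasDerivAt_sqrt (ne_of_gt h4y)).comp y dsq
    simpa [Function.comp_def, hrdef] using this
  have dv : HasDerivAt (fun t : ℝ => 4 - x * t + s * Real.sqrt (4 - t ^ 2))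
      (-x + s * (1 / (2 * r) * -(2 * y))) y := by
    have h1 : HasDerivAt (fun t : ℝ => 4 - x * t) (-x) y := by
      simpa using ((hasDerivAt_id y).const_mul x).const_sub 4
    exact h1.add (dr.const_mul s)
  have dlog1 : HasDerivAt (fun t : ℝ => Real.log (4 - x * t + s * Real.sqrt (4 - t ^ 2)))
      ((-x + s * (1 / (2 * r) * -(2 * y))) / (4 - x * y + s * r)) y := by
    have := dv.log (by rw [← hrdef]; exact hvne)
    simpa [hrdef] using this
  have dlog2 : HasDerivAt (fun t : ℝ => Real.log (t - x)) (1 / (y - x)) y := by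
    have := ((hasDerivAt_id y).sub_const x).log hyx
    simpa using this
  have dF : HasDerivAt (Fa x)
      (x * (1 / Real.sqrt (1 - (y / 2) ^ 2) * (1 / 2)) - 1 / (2 * r) * -(2 * y) +
        s * ((-x + s * (1 / (2 * r) * -(2 * y))) / (4 - x * y + s * r) - 1 / (y - x))) y := by
    exact ((d1.const_mul x).sub dr).add ((dlog1.sub dlog2).const_mul s)
  convert dF using 1
  have h12 : Real.sqrt (1 - (y / 2) ^ 2) = r / 2 := by
    have h : (1 - (y / 2) ^ 2 : ℝ) = (r / 2) ^ 2 := by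
      linear_combination (-1/4 : ℝ) * hr2
    rw [h, Real.sqrt_sq (by positivity)]
  rw [h12]
  have e2 : (1:ℝ) / (2 * r) * -(2 * y) = -(y / r) := by field_simp
  rw [e2]
  have e3 : (-x + s * -(y / r)) / (4 - x * y + s * r) - 1 / (y - x) = s / ((x - y) * r) := by
    field_simp
    ring_nf
    linear_combination (s*(y-x))*hr2 + (r*(x-y))*hs2
  rw [e3]
  have e1 : x * (1 / (r / 2) * (1 / 2)) = x / r := by
    field_simp
  rw [e1]
  field_simp
  ring_nf
  linear_combination hr2 - hs2


lemma Fa_contOn {x : ℝ} (hx : |x| < 2) {A : Set ℝ} (hA : ∀ y ∈ A, y ≠ x ∧ |y| ≤ 2) :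
    ContinuousOn (Fa x) A := by
  have hs : (0:ℝ) ≤ Real.sqrt (4 - x ^ 2) := Real.sqrt_nonneg _
  apply ContinuousOn.add
  · apply ContinuousOn.sub
    · exact (continuous_const.mul (Real.continuous_arcsin.comp (continuous_id.div_const 2))).continuousOn
    · exact (Real.continuous_sqrt.comp (by continuity)).continuousOn
  · apply ContinuousOn.mul continuous_const.continuousOn
    apply ContinuousOn.sub
    · apply ContinuousOn.log
      · exact (by continuity : Continuous fun y : ℝ =>
          4 - x * y + Real.sqrt (4 - x ^ 2) * Real.sqrt (4 - y ^ 2)).continuousOn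
      · intro y hy
        obtain ⟨-, hy2⟩ := hA y hy
        have : x * y < 4 := by
          have h1 : |x * y| ≤ |x| * |y| := le_of_eq (abs_mul x y)
          nlinarith [le_abs_self (x*y), abs_nonneg x, abs_nonneg y]
        nlinarith [mul_nonneg hs (Real.sqrt_nonneg (4 - y ^ 2))]
    · apply ContinuousOn.log
      · exact (continuous_id.sub continuous_const).continuousOn
      · intro y hy
        exact sub_ne_zero.mpr (hA y hy).1
lemma Fa_ftc {x : ℝ} (hx : |x| < 2) {a b : ℝ} (hab : a ≤ b) (ha : -2 ≤ a) (hb : b ≤ 2)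
    (hnx : ∀ y ∈ Set.Icc a b, y ≠ x) :
    ∫ y in a..b, Real.sqrt (4 - y ^ 2) / (x - y) = Fa x b - Fa x a := by
  apply intervalIntegral.integral_eq_sub_of_hasDeriv_right_of_le hab
  · exact Fa_contOn hx (fun y hy => ⟨hnx y hy, abs_le.mpr ⟨by linarith [hy.1], by linarith [hy.2]⟩⟩)
  · intro y hy
    have hy2 : |y| < 2 := abs_lt.mpr ⟨by linarith [hy.1], by linarith [hy.2]⟩
    exact (Fa_hasDerivAt hx hy2 (hnx y (Set.mem_Icc.mpr ⟨hy.1.le, hy.2.le⟩))).hasDerivWithinAt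
  · apply ContinuousOn.intervalIntegrable
    rw [Set.uIcc_of_le hab]
    apply ContinuousOn.div
    · exact (Real.continuous_sqrt.comp (by continuity)).continuousOn
    · exact (continuous_const.sub continuous_id).continuousOn
    · intro y hy
      exact sub_ne_zero.mpr fun h => hnx y hy h.symm

lemma Fa_two {x : ℝ} (hx1 : -2 < x) (hx2 : x < 2) :
    Fa x 2 = x * (Real.pi / 2) + Real.sqrt (4 - x ^ 2) * Real.log 2 := by
  have h1 : Real.sqrt (4 - (2:ℝ) ^ 2) = 0 := by norm_num
  have h2 : Real.arcsin ((2:ℝ) / 2) = Real.pi / 2 := by norm_num [Real.arcsin_one]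
  have h3 : (4 - x * 2 : ℝ) = 2 * (2 - x) := by ring
  rw [Fa, h1, h2, mul_zero, add_zero, h3, Real.log_mul (by norm_num) (by linarith)]
  ring

lemma Fa_neg_two {x : ℝ} (hx1 : -2 < x) (hx2 : x < 2) :
    Fa x (-2) = -(x * (Real.pi / 2)) + Real.sqrt (4 - x ^ 2) * Real.log 2 := by
  have h1 : Real.sqrt (4 - (-2:ℝ) ^ 2) = 0 := by norm_num
  have h2 : Real.arcsin ((-2:ℝ) / 2) = -(Real.pi / 2) := by norm_num [Real.arcsin_neg_one]
  have h3 : (4 - x * (-2) : ℝ) = 2 * (2 + x) := by ring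
  have h4 : Real.log (-2 - x) = Real.log (2 + x) := by
    rw [show (-2 - x : ℝ) = -(2 + x) by ring, Real.log_neg_eq_log]
  rw [Fa, h1, h2, mul_zero, add_zero, h3, h4, Real.log_mul (by norm_num) (by linarith)]
  ring


lemma gcontOn {x : ℝ} {A : Set ℝ} (h : ∀ y ∈ A, x - y ≠ 0) :
    ContinuousOn (fun y : ℝ => Real.sqrt (4 - y ^ 2) / (2 * Real.pi) / (x - y)) A := by
  apply ContinuousOn.div
  · exact ((Real.continuous_sqrt.comp (by continuity)).div_const (2 * Real.pi)).continuousOn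
  · exact (continuous_const.sub continuous_id).continuousOn
  · exact h

lemma key_eq {x : ℝ} (hx1 : -2 < x) (hx2 : x < 2) {ε : ℝ} (hε0 : 0 < ε)
    (hε1 : ε < 2 - x) (hε2 : ε < x + 2) :
    (∫ y in {y : ℝ | ε ≤ |x - y|},
        (if |y| ≤ 2 then Real.sqrt (4 - y ^ 2) / (2 * Real.pi) else 0) / (x - y))
      = ((Fa x (x - ε) - Fa x (-2)) + (Fa x 2 - Fa x (x + ε))) / (2 * Real.pi) := by
  have hxa : |x| < 2 := abs_lt.mpr ⟨hx1, hx2⟩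
  set g : ℝ → ℝ := fun y => Real.sqrt (4 - y ^ 2) / (2 * Real.pi) / (x - y) with hg
  set A : Set ℝ := Set.Icc (-2 : ℝ) (x - ε) with hA
  set B : Set ℝ := Set.Icc (x + ε) (2 : ℝ) with hB
  have hSm : MeasurableSet {y : ℝ | ε ≤ |x - y|} :=
    measurableSet_le measurable_const ((continuous_const.sub continuous_id).abs.measurable)
  have hABm : MeasurableSet (A ∪ B) := (measurableSet_Icc.union measurableSet_Icc)
  have step1 : (∫ y in {y : ℝ | ε ≤ |x - y|},
      (if |y| ≤ 2 then Real.sqrt (4 - y ^ 2) / (2 * Real.pi) else 0) / (x - y))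
      = ∫ y in {y : ℝ | ε ≤ |x - y|}, (A ∪ B).indicator g y := by
    apply setIntegral_congr_fun hSm
    intro y hy
    simp only [Set.mem_setOf_eq] at hy
    by_cases h2 : |y| ≤ 2
    · have hyAB : y ∈ A ∪ B := by
        obtain ⟨hb1, hb2⟩ := abs_le.mp h2
        rcases le_abs.mp hy with h | h
        · left; exact Set.mem_Icc.mpr ⟨hb1, by linarith⟩
        · right; exact Set.mem_Icc.mpr ⟨by linarith, hb2⟩
      simp only [h2, if_true, Set.indicator_of_mem hyAB, hg]
    · have hyAB : y ∉ A ∪ B := by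
        intro hm
        apply h2
        rcases hm with h | h
        · exact abs_le.mpr ⟨h.1, by linarith [h.2, hε0]⟩
        · exact abs_le.mpr ⟨by linarith [h.1, hε0], h.2⟩
      simp only [h2, if_false, Set.indicator_of_notMem hyAB, zero_div]
  have hsub : A ∪ B ⊆ {y : ℝ | ε ≤ |x - y|} := by
    rintro y (h | h)
    · have : ε ≤ x - y := by linarith [h.2]
      exact le_trans this (le_abs_self _)
    · have : ε ≤ -(x - y) := by linarith [h.1]
      exact le_trans this (neg_le_abs _)
  have hIA : IntegrableOn g A :=
    ContinuousOn.integrableOn_compact isCompact_Icc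
      (gcontOn (fun y hy => sub_ne_zero.mpr (by intro h; have := hy.2; rw [← h] at this; linarith)))
  have hIB : IntegrableOn g B :=
    ContinuousOn.integrableOn_compact isCompact_Icc
      (gcontOn (fun y hy => sub_ne_zero.mpr (by intro h; have := hy.1; rw [← h] at this; linarith)))
  have hdisj : Disjoint A B := by
    rw [Set.disjoint_left]
    intro y h1 h2
    have := h1.2; have := h2.1; linarith
  have step2 : (∫ y in {y : ℝ | ε ≤ |x - y|}, (A ∪ B).indicator g y)
      = (∫ y in A, g y) + ∫ y in B, g y := by
    rw [setIntegral_indicator hABm, Set.inter_eq_self_of_subset_right hsub,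
      setIntegral_union hdisj measurableSet_Icc hIA hIB]
  have hle1 : (-2:ℝ) ≤ x - ε := by linarith
  have hle2 : (x + ε : ℝ) ≤ 2 := by linarith
  have intA : (∫ y in A, g y) = (Fa x (x - ε) - Fa x (-2)) / (2 * Real.pi) := by
    rw [hA, integral_Icc_eq_integral_Ioc, ← intervalIntegral.integral_of_le hle1]
    rw [← Fa_ftc hxa hle1 le_rfl (by linarith) (fun y hy => by
      have := hy.2; intro h; rw [h] at this; linarith)]
    rw [← intervalIntegral.integral_div]
    apply intervalIntegral.integral_congr
    intro y _
    rw [hg]; simp only; rw [div_right_comm]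
  have intB : (∫ y in B, g y) = (Fa x 2 - Fa x (x + ε)) / (2 * Real.pi) := by
    rw [hB, integral_Icc_eq_integral_Ioc, ← intervalIntegral.integral_of_le hle2]
    rw [← Fa_ftc hxa hle2 (by linarith) le_rfl (fun y hy => by
      have := hy.1; intro h; rw [h] at this; linarith)]
    rw [← intervalIntegral.integral_div]
    apply intervalIntegral.integral_congr
    intro y _
    rw [hg]; simp only; rw [div_right_comm]
  rw [step1, step2, intA, intB]
  ring


noncomputable def Dd (x ε : ℝ) : ℝ :=
  x * (Real.arcsin ((x - ε) / 2) - Real.arcsin ((x + ε) / 2))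
    - (Real.sqrt (4 - (x - ε) ^ 2) - Real.sqrt (4 - (x + ε) ^ 2))
    + Real.sqrt (4 - x ^ 2) *
        (Real.log (4 - x * (x - ε) + Real.sqrt (4 - x ^ 2) * Real.sqrt (4 - (x - ε) ^ 2))
          - Real.log (4 - x * (x + ε) + Real.sqrt (4 - x ^ 2) * Real.sqrt (4 - (x + ε) ^ 2)))

lemma Dd_eq {x : ℝ} (hx1 : -2 < x) (hx2 : x < 2) {ε : ℝ} (hε0 : 0 < ε) :
    ((Fa x (x - ε) - Fa x (-2)) + (Fa x 2 - Fa x (x + ε))) / (2 * Real.pi)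
      = (Real.pi * x + Dd x ε) / (2 * Real.pi) := by
  have l1 : Real.log (x - ε - x) = Real.log ε := by
    rw [show (x - ε - x : ℝ) = -ε by ring, Real.log_neg_eq_log]
  have l2 : Real.log (x + ε - x) = Real.log ε := by
    rw [show (x + ε - x : ℝ) = ε by ring]
  rw [Fa_two hx1 hx2, Fa_neg_two hx1 hx2]
  simp only [Fa, Dd, l1, l2]
  ring

lemma Dd_tendsto {x : ℝ} (hx1 : -2 < x) (hx2 : x < 2) :
    Filter.Tendsto (fun ε : ℝ => (Real.pi * x + Dd x ε) / (2 * Real.pi))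
      (nhds 0) (nhds (x / 2)) := by
  have hπ : (0:ℝ) < Real.pi := Real.pi_pos
  have h4x : (0:ℝ) < 4 - x ^ 2 := by nlinarith
  have hs2 : Real.sqrt (4 - x ^ 2) ^ 2 = 4 - x ^ 2 := Real.sq_sqrt h4x.le
  have c0 : Continuous fun ε : ℝ => Real.sqrt (4 - (x - ε) ^ 2) :=
    Real.continuous_sqrt.comp (by continuity)
  have c0' : Continuous fun ε : ℝ => Real.sqrt (4 - (x + ε) ^ 2) :=
    Real.continuous_sqrt.comp (by continuity)
  have hval : (4 - x * (x - 0) + Real.sqrt (4 - x ^ 2) * Real.sqrt (4 - (x - 0) ^ 2)) ≠ 0 := by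
    have : Real.sqrt (4 - x ^ 2) * Real.sqrt (4 - x ^ 2) = 4 - x ^ 2 := by nlinarith
    simp only [sub_zero]
    nlinarith
  have hval' : (4 - x * (x + 0) + Real.sqrt (4 - x ^ 2) * Real.sqrt (4 - (x + 0) ^ 2)) ≠ 0 := by
    have : Real.sqrt (4 - x ^ 2) * Real.sqrt (4 - x ^ 2) = 4 - x ^ 2 := by nlinarith
    simp only [add_zero]
    nlinarith
  have clog1 : ContinuousAt (fun ε : ℝ =>
      Real.log (4 - x * (x - ε) + Real.sqrt (4 - x ^ 2) * Real.sqrt (4 - (x - ε) ^ 2))) 0 := by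
    apply ContinuousAt.comp (x := (0:ℝ)) (g := Real.log)
    · exact Real.continuousAt_log hval
    · exact ((continuous_const.sub (continuous_const.mul (continuous_const.sub continuous_id))).add
        (continuous_const.mul c0)).continuousAt
  have clog2 : ContinuousAt (fun ε : ℝ =>
      Real.log (4 - x * (x + ε) + Real.sqrt (4 - x ^ 2) * Real.sqrt (4 - (x + ε) ^ 2))) 0 := by
    apply ContinuousAt.comp (x := (0:ℝ)) (g := Real.log)
    · exact Real.continuousAt_log hval'
    · exact ((continuous_const.sub (continuous_const.mul (continuous_const.add continuous_id))).add
        (continuous_const.mul c0')).continuousAt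
  have hDc : ContinuousAt (Dd x) 0 := by
    unfold Dd
    apply ContinuousAt.add
    · apply ContinuousAt.sub
      · exact (continuous_const.mul ((Real.continuous_arcsin.comp (by continuity)).sub
          (Real.continuous_arcsin.comp (by continuity)))).continuousAt
      · exact (c0.sub c0').continuousAt
    · exact continuousAt_const.mul (clog1.sub clog2)
  have hD0 : Dd x 0 = 0 := by simp [Dd]
  have hlim : Filter.Tendsto (fun ε : ℝ => (Real.pi * x + Dd x ε) / (2 * Real.pi)) (nhds 0)
      (nhds ((Real.pi * x + Dd x 0) / (2 * Real.pi))) :=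
    ((continuousAt_const.add hDc).div_const _).tendsto
  have hveq : (Real.pi * x + Dd x 0) / (2 * Real.pi) = x / 2 := by
    rw [hD0, add_zero]
    field_simp
  rwa [hveq] at hlim

theorem stmt_14 :
    ∀ x ∈ Set.Ioo (-2 : ℝ) 2,
      Tendsto
        (fun ε : ℝ =>
          ∫ y in {y : ℝ | ε ≤ |x - y|},
            (if |y| ≤ 2 then Real.sqrt (4 - y ^ 2) / (2 * Real.pi) else 0) / (x - y))
        (nhdsWithin 0 (Set.Ioi 0)) (nhds (x / 2)) := by
  rintro x ⟨hx1, hx2⟩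
  have hδ0 : 0 < min (2 - x) (x + 2) := lt_min (by linarith) (by linarith)
  have hmem : Set.Ioo (0:ℝ) (min (2 - x) (x + 2)) ∈ nhdsWithin (0:ℝ) (Set.Ioi 0) := by
    have h := inter_mem (self_mem_nhdsWithin (a := (0:ℝ)) (s := Set.Ioi 0))
      (mem_nhdsWithin_of_mem_nhds (Iio_mem_nhds hδ0))
    simpa [Set.Ioi_inter_Iio] using h
  have key : ∀ ε ∈ Set.Ioo (0:ℝ) (min (2 - x) (x + 2)),
      (fun ε : ℝ => (Real.pi * x + Dd x ε) / (2 * Real.pi)) ε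
        = ∫ y in {y : ℝ | ε ≤ |x - y|},
            (if |y| ≤ 2 then Real.sqrt (4 - y ^ 2) / (2 * Real.pi) else 0) / (x - y) := by
    rintro ε ⟨hε0, hεδ⟩
    rw [lt_min_iff] at hεδ
    rw [key_eq hx1 hx2 hε0 hεδ.1 hεδ.2, Dd_eq hx1 hx2 hε0]
  exact Tendsto.congr' (Filter.eventuallyEq_of_mem hmem key)
    ((Dd_tendsto hx1 hx2).mono_left nhdsWithin_le_nhds)
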